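/- arXiv:2302.07807 — 13 statements merged into one kernel-verified Lean document; each statement's English description precedes it below -/
import Mathlib

section
/- T is positively homogeneous: for every real λ > 0 and every u ∈ E, T (λ • u) = λ • T u. -/
/-- The obstacle solution map `T` is positively homogeneous:
`T (λ • u) = λ • T u` for every `λ > 0`. -/
theorem obstacle_map_pos_homogeneous
    {E : Type*} [NormedAddCommGroup E] [InnerProductSpace ℝ E] [PartialOrder E]
    (hadd : ∀ x y z : E, x ≤ y → x + z ≤ y + z)
    (hsmul : ∀ (c : ℝ) (x : E), 0 ≤ x → 0 ≤ c → 0 ≤ c • x)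
    (T : E → E)
    (hTle : ∀ u : E, u ≤ T u)
    (hTmin : ∀ u v : E, u ≤ v → ‖T u‖ ≤ ‖v‖)
    (hTuniq : ∀ u m : E, u ≤ m → (∀ v : E, u ≤ v → ‖m‖ ≤ ‖v‖) → m = T u) :
    ∀ (l : ℝ), 0 < l → ∀ u : E, T (l • u) = l • T u := by
  have smul_mono : ∀ (c : ℝ) (x y : E), 0 ≤ c → x ≤ y → c • x ≤ c • y := by
    intro c x y hc hxy
    have h1 : (0 : E) ≤ y - x := by
      have := hadd x y (-x) hxy
      simpa [sub_eq_add_neg] using this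
    have h2 := hsmul c (y - x) h1 hc
    have := hadd 0 (c • (y - x)) (c • x) h2
    simpa [smul_sub, sub_add_cancel] using this
  intro l hl u
  symm
  apply hTuniq
  · exact smul_mono l u (T u) hl.le (hTle u)
  · intro v hv
    have h1 : u ≤ l⁻¹ • v := by
      have := smul_mono l⁻¹ (l • u) v (inv_nonneg.mpr hl.le) hv
      simpa [smul_smul, inv_mul_cancel₀ hl.ne'] using this
    have h2 := hTmin u (l⁻¹ • v) h1
    have h3 : ‖l⁻¹ • v‖ = l⁻¹ * ‖v‖ := by
      rw [norm_smul, Real.norm_eq_abs, abs_of_nonneg (inv_nonneg.mpr hl.le)]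
    rw [norm_smul, Real.norm_eq_abs, abs_of_nonneg hl.le]
    calc l * ‖T u‖ ≤ l * (l⁻¹ * ‖v‖) := by
          apply mul_le_mul_of_nonneg_left _ hl.le
          rw [← h3]; exact h2
      _ = ‖v‖ := by field_simp
end

section
/- For every u ∈ E, T_F (Φ u) = Φ (T_E u). -/
/-- The obstacle solution maps commute with a linear isometric order isomorphism:
`T_F (Φ u) = Φ (T_E u)`. -/
theorem obstacle_map_conformal_transformation
    {E F : Type*} [NormedAddCommGroup E] [InnerProductSpace ℝ E] [PartialOrder E]
    [NormedAddCommGroup F] [InnerProductSpace ℝ F] [PartialOrder F]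
    (haddE : ∀ x y z : E, x ≤ y → x + z ≤ y + z)
    (hsmulE : ∀ (c : ℝ) (x : E), 0 ≤ x → 0 ≤ c → 0 ≤ c • x)
    (haddF : ∀ x y z : F, x ≤ y → x + z ≤ y + z)
    (hsmulF : ∀ (c : ℝ) (x : F), 0 ≤ x → 0 ≤ c → 0 ≤ c • x)
    (TE : E → E)
    (hTEle : ∀ u : E, u ≤ TE u)
    (hTEmin : ∀ u v : E, u ≤ v → ‖TE u‖ ≤ ‖v‖)
    (hTEuniq : ∀ u m : E, u ≤ m → (∀ v : E, u ≤ v → ‖m‖ ≤ ‖v‖) → m = TE u)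
    (TF : F → F)
    (hTFle : ∀ u : F, u ≤ TF u)
    (hTFmin : ∀ u v : F, u ≤ v → ‖TF u‖ ≤ ‖v‖)
    (hTFuniq : ∀ u m : F, u ≤ m → (∀ v : F, u ≤ v → ‖m‖ ≤ ‖v‖) → m = TF u)
    (Φ : E →ₗ[ℝ] F)
    (hbij : Function.Bijective Φ)
    (hiso : ∀ x : E, ‖Φ x‖ = ‖x‖)
    (horder : ∀ x y : E, x ≤ y ↔ Φ x ≤ Φ y) :
    ∀ u : E, TF (Φ u) = Φ (TE u) := by
  intro u
  refine (hTFuniq (Φ u) (Φ (TE u)) ((horder _ _).mp (hTEle u)) ?_).symm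
  intro v hv
  obtain ⟨w, rfl⟩ := hbij.2 v
  rw [hiso, hiso]
  exact hTEmin u w ((horder _ _).mpr hv)
end

section
/- Assume N_E : E → ℝ and N_F : F → ℝ satisfy N_F(Φ x) = N_E(x) for all x ∈ E. Then the optimal-control quotients correspond: for every u ∈ E, ‖Φ u‖² / N_F(T_F(Φ u))² = ‖u‖² / N_E(T_E u)². -/
/-- The optimal-control quotients correspond under a linear isometric order
isomorphism `Φ` compatible with the norms `N_E`, `N_F`. -/
theorem optimal_control_quotient_conformal_invariance
    {E F : Type*} [NormedAddCommGroup E] [InnerProductSpace ℝ E] [PartialOrder E]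
    [NormedAddCommGroup F] [InnerProductSpace ℝ F] [PartialOrder F]
    (haddE : ∀ x y z : E, x ≤ y → x + z ≤ y + z)
    (hsmulE : ∀ (c : ℝ) (x : E), 0 ≤ x → 0 ≤ c → 0 ≤ c • x)
    (haddF : ∀ x y z : F, x ≤ y → x + z ≤ y + z)
    (hsmulF : ∀ (c : ℝ) (x : F), 0 ≤ x → 0 ≤ c → 0 ≤ c • x)
    (TE : E → E)
    (hTEle : ∀ u : E, u ≤ TE u)
    (hTEmin : ∀ u v : E, u ≤ v → ‖TE u‖ ≤ ‖v‖)
    (hTEuniq : ∀ u m : E, u ≤ m → (∀ v : E, u ≤ v → ‖m‖ ≤ ‖v‖) → m = TE u)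
    (TF : F → F)
    (hTFle : ∀ u : F, u ≤ TF u)
    (hTFmin : ∀ u v : F, u ≤ v → ‖TF u‖ ≤ ‖v‖)
    (hTFuniq : ∀ u m : F, u ≤ m → (∀ v : F, u ≤ v → ‖m‖ ≤ ‖v‖) → m = TF u)
    (Φ : E →ₗ[ℝ] F)
    (hbij : Function.Bijective Φ)
    (hiso : ∀ x : E, ‖Φ x‖ = ‖x‖)
    (horder : ∀ x y : E, x ≤ y ↔ Φ x ≤ Φ y)
    (NE : E → ℝ) (NF : F → ℝ)
    (hN : ∀ x : E, NF (Φ x) = NE x) :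
    ∀ u : E, ‖Φ u‖ ^ 2 / NF (TF (Φ u)) ^ 2 = ‖u‖ ^ 2 / NE (TE u) ^ 2 := by
  intro u
  have hkey : Φ (TE u) = TF (Φ u) := by
    apply hTFuniq
    · exact (horder u (TE u)).mp (hTEle u)
    · intro v hv
      obtain ⟨w, rfl⟩ := hbij.2 v
      rw [hiso, hiso]
      exact hTEmin u w ((horder u w).mpr hv)
  rw [← hkey, hN, hiso]
end

section
/- Monotonicity formula for J: for every u ∈ E with 0 < u, J(u) − J(T u) ≥ (‖u‖² − ‖T u‖²) / N(T u)², and (‖u‖² − ‖T u‖²) / N(T u)² ≥ 0. -/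
/-- Monotonicity formula for the Yamabe functional `J u = ‖u‖² / N u²`. -/
theorem yamabe_functional_monotonicity
    {E : Type*} [NormedAddCommGroup E] [InnerProductSpace ℝ E] [PartialOrder E]
    (hadd : ∀ x y z : E, x ≤ y → x + z ≤ y + z)
    (hsmul : ∀ (c : ℝ) (x : E), 0 ≤ x → 0 ≤ c → 0 ≤ c • x)
    (T : E → E)
    (hTle : ∀ u : E, u ≤ T u)
    (hTmin : ∀ u v : E, u ≤ v → ‖T u‖ ≤ ‖v‖)
    (hTuniq : ∀ u m : E, u ≤ m → (∀ v : E, u ≤ v → ‖m‖ ≤ ‖v‖) → m = T u)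
    (N : E → ℝ)
    (hNpos : ∀ u : E, 0 < u → 0 < N u)
    (hNmono : ∀ u v : E, 0 < u → u ≤ v → N u ≤ N v) :
    ∀ u : E, 0 < u →
      ‖u‖ ^ 2 / N u ^ 2 - ‖T u‖ ^ 2 / N (T u) ^ 2 ≥
          (‖u‖ ^ 2 - ‖T u‖ ^ 2) / N (T u) ^ 2 ∧
        (‖u‖ ^ 2 - ‖T u‖ ^ 2) / N (T u) ^ 2 ≥ 0 := by
  intro u hu
  have hNu : 0 < N u := hNpos u hu
  have hTu : 0 < T u := lt_of_lt_of_le hu (hTle u)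
  have hNTu : 0 < N (T u) := hNpos _ hTu
  have hNle : N u ≤ N (T u) := hNmono u (T u) hu (hTle u)
  have hnorm : ‖T u‖ ≤ ‖u‖ := hTmin u u le_rfl
  have hdiff : 0 ≤ ‖u‖ ^ 2 - ‖T u‖ ^ 2 := by
    have := pow_le_pow_left₀ (norm_nonneg _) hnorm 2
    linarith
  have hsq : N u ^ 2 ≤ N (T u) ^ 2 := pow_le_pow_left₀ hNu.le hNle 2
  constructor
  · have h1 : ‖u‖ ^ 2 / N (T u) ^ 2 ≤ ‖u‖ ^ 2 / N u ^ 2 :=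
      div_le_div_of_nonneg_left (by positivity) (by positivity) hsq
    have h2 : (‖u‖ ^ 2 - ‖T u‖ ^ 2) / N (T u) ^ 2
        = ‖u‖ ^ 2 / N (T u) ^ 2 - ‖T u‖ ^ 2 / N (T u) ^ 2 := by ring
    rw [h2]; linarith
  · positivity
end

section
/- Rigidity for J: for every u ∈ E with 0 < u, J(T u) ≤ J(u); moreover, if J(u) = J(T u) then T u = u. -/
/-- Rigidity for the Yamabe functional `J u = ‖u‖² / N u²`:
`J (T u) ≤ J u` and equality forces `T u = u`. -/
theorem yamabe_functional_rigidity
    {E : Type*} [NormedAddCommGroup E] [InnerProductSpace ℝ E] [PartialOrder E]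
    (hadd : ∀ x y z : E, x ≤ y → x + z ≤ y + z)
    (hsmul : ∀ (c : ℝ) (x : E), 0 ≤ x → 0 ≤ c → 0 ≤ c • x)
    (T : E → E)
    (hTle : ∀ u : E, u ≤ T u)
    (hTmin : ∀ u v : E, u ≤ v → ‖T u‖ ≤ ‖v‖)
    (hTuniq : ∀ u m : E, u ≤ m → (∀ v : E, u ≤ v → ‖m‖ ≤ ‖v‖) → m = T u)
    (N : E → ℝ)
    (hNpos : ∀ u : E, 0 < u → 0 < N u)
    (hNmono : ∀ u v : E, 0 < u → u ≤ v → N u ≤ N v) :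
    ∀ u : E, 0 < u →
      ‖T u‖ ^ 2 / N (T u) ^ 2 ≤ ‖u‖ ^ 2 / N u ^ 2 ∧
        (‖u‖ ^ 2 / N u ^ 2 = ‖T u‖ ^ 2 / N (T u) ^ 2 → T u = u) := by
  intro u hu
  have hle := hTle u
  have hnorm : ‖T u‖ ≤ ‖u‖ := hTmin u u le_rfl
  have hNpu : 0 < N u := hNpos u hu
  have hNle : N u ≤ N (T u) := hNmono u (T u) hu hle
  have hNpT : 0 < N (T u) := lt_of_lt_of_le hNpu hNle
  have hJ : ‖T u‖ ^ 2 / N (T u) ^ 2 ≤ ‖u‖ ^ 2 / N u ^ 2 := by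
    apply div_le_div₀ (by positivity) (by gcongr) (by positivity) (by gcongr)
  refine ⟨hJ, fun heq => ?_⟩
  have hmid : ‖T u‖ ^ 2 / N (T u) ^ 2 ≤ ‖T u‖ ^ 2 / N u ^ 2 := by
    gcongr
  have h2 : ‖u‖ ^ 2 / N u ^ 2 ≤ ‖T u‖ ^ 2 / N u ^ 2 := heq.le.trans hmid
  have hnn : ‖u‖ ^ 2 ≤ ‖T u‖ ^ 2 := by
    have := (div_le_div_iff_of_pos_right (by positivity : (0:ℝ) < N u ^ 2)).mp h2
    exact this
  have hne : ‖u‖ = ‖T u‖ :=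
    le_antisymm (by nlinarith [norm_nonneg u, norm_nonneg (T u)]) hnorm
  refine (hTuniq u u le_rfl fun v hv => ?_).symm
  rw [hne]
  exact hTmin u v hv
end

section
/- Minimizers of J are fixed points of T: if u ∈ E with 0 < u satisfies J(u) = ⨅ {J(v) : v ∈ E, 0 < v}, then T u = u. -/
/-- Minimizers of the Yamabe functional `J u = ‖u‖² / N u²` over the positive
cone are fixed points of `T`. -/
theorem yamabe_minimizer_is_fixed_point
    {E : Type*} [NormedAddCommGroup E] [InnerProductSpace ℝ E] [PartialOrder E]
    (hadd : ∀ x y z : E, x ≤ y → x + z ≤ y + z)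
    (hsmul : ∀ (c : ℝ) (x : E), 0 ≤ x → 0 ≤ c → 0 ≤ c • x)
    (T : E → E)
    (hTle : ∀ u : E, u ≤ T u)
    (hTmin : ∀ u v : E, u ≤ v → ‖T u‖ ≤ ‖v‖)
    (hTuniq : ∀ u m : E, u ≤ m → (∀ v : E, u ≤ v → ‖m‖ ≤ ‖v‖) → m = T u)
    (N : E → ℝ)
    (hNpos : ∀ u : E, 0 < u → 0 < N u)
    (hNmono : ∀ u v : E, 0 < u → u ≤ v → N u ≤ N v) :
    ∀ u : E, 0 < u →
      ‖u‖ ^ 2 / N u ^ 2 = sInf {r : ℝ | ∃ v : E, 0 < v ∧ r = ‖v‖ ^ 2 / N v ^ 2} →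
      T u = u := by
  intro u hu hmin
  refine (hTuniq u u le_rfl ?_).symm
  intro v huv
  by_contra hcon
  push_neg at hcon
  have hv : 0 < v := lt_of_lt_of_le hu huv
  have hNu : 0 < N u := hNpos u hu
  have hNv : 0 < N v := hNpos v hv
  have hNle : N u ≤ N v := hNmono u v hu huv
  have hJv : ‖v‖ ^ 2 / N v ^ 2 < ‖u‖ ^ 2 / N u ^ 2 := by
    have h1 : ‖v‖ ^ 2 < ‖u‖ ^ 2 := by
      have := norm_nonneg v
      nlinarith
    have h2 : N u ^ 2 ≤ N v ^ 2 := by nlinarith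
    calc ‖v‖ ^ 2 / N v ^ 2 ≤ ‖v‖ ^ 2 / N u ^ 2 := by
          gcongr
      _ < ‖u‖ ^ 2 / N u ^ 2 := by gcongr
  have hmem : ‖v‖ ^ 2 / N v ^ 2 ∈ {r : ℝ | ∃ w : E, 0 < w ∧ r = ‖w‖ ^ 2 / N w ^ 2} :=
    ⟨v, hv, rfl⟩
  have hbdd : BddBelow {r : ℝ | ∃ w : E, 0 < w ∧ r = ‖w‖ ^ 2 / N w ^ 2} := by
    refine ⟨0, ?_⟩
    rintro r ⟨w, hw, rfl⟩
    positivity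
  have := csInf_le hbdd hmem
  rw [← hmin] at this
  linarith
end

section
/- Minimizing sequences can be replaced by fixed points: if (u_l) is a sequence in E with 0 < u_l for every l and J(u_l) converges to m := ⨅ {J(v) : v ∈ E, 0 < v}, then J(T u_l) also converges to m, and T(T u_l) = T u_l for every l. -/
/-- Minimizing sequences of `J u = ‖u‖² / N u²` can be replaced by sequences of
fixed points of `T`: `J (T u_l)` also converges to the infimum, and each `T u_l`
is a fixed point of `T`. -/
theorem yamabe_minimizing_sequence_fixed_points
    {E : Type*} [NormedAddCommGroup E] [InnerProductSpace ℝ E] [PartialOrder E]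
    (hadd : ∀ x y z : E, x ≤ y → x + z ≤ y + z)
    (hsmul : ∀ (c : ℝ) (x : E), 0 ≤ x → 0 ≤ c → 0 ≤ c • x)
    (T : E → E)
    (hTle : ∀ u : E, u ≤ T u)
    (hTmin : ∀ u v : E, u ≤ v → ‖T u‖ ≤ ‖v‖)
    (hTuniq : ∀ u m : E, u ≤ m → (∀ v : E, u ≤ v → ‖m‖ ≤ ‖v‖) → m = T u)
    (N : E → ℝ)
    (hNpos : ∀ u : E, 0 < u → 0 < N u)
    (hNmono : ∀ u v : E, 0 < u → u ≤ v → N u ≤ N v) :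
    ∀ u : ℕ → E, (∀ l : ℕ, 0 < u l) →
      Filter.Tendsto (fun l => ‖u l‖ ^ 2 / N (u l) ^ 2) Filter.atTop
        (nhds (sInf {r : ℝ | ∃ v : E, 0 < v ∧ r = ‖v‖ ^ 2 / N v ^ 2})) →
      Filter.Tendsto (fun l => ‖T (u l)‖ ^ 2 / N (T (u l)) ^ 2) Filter.atTop
          (nhds (sInf {r : ℝ | ∃ v : E, 0 < v ∧ r = ‖v‖ ^ 2 / N v ^ 2})) ∧
        ∀ l : ℕ, T (T (u l)) = T (u l) := by
  intro u hupos htend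
  set S := {r : ℝ | ∃ v : E, 0 < v ∧ r = ‖v‖ ^ 2 / N v ^ 2} with hS
  have hTpos : ∀ l, 0 < T (u l) := fun l => lt_of_lt_of_le (hupos l) (hTle (u l))
  have hbdd : BddBelow S := by
    refine ⟨0, fun r hr => ?_⟩
    obtain ⟨v, hv, rfl⟩ := hr
    positivity
  have hle1 : ∀ l, sInf S ≤ ‖T (u l)‖ ^ 2 / N (T (u l)) ^ 2 := fun l =>
    csInf_le hbdd ⟨T (u l), hTpos l, rfl⟩
  have hle2 : ∀ l, ‖T (u l)‖ ^ 2 / N (T (u l)) ^ 2 ≤ ‖u l‖ ^ 2 / N (u l) ^ 2 := by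
    intro l
    have hN1 : 0 < N (u l) := hNpos _ (hupos l)
    have hN2 : 0 < N (T (u l)) := hNpos _ (hTpos l)
    have hNle : N (u l) ≤ N (T (u l)) := hNmono _ _ (hupos l) (hTle (u l))
    have hnorm : ‖T (u l)‖ ≤ ‖u l‖ := hTmin (u l) (u l) le_rfl
    apply div_le_div₀ (by positivity)
    · exact pow_le_pow_left₀ (norm_nonneg _) hnorm 2
    · positivity
    · exact pow_le_pow_left₀ hN1.le hNle 2
  constructor
  · exact tendsto_of_tendsto_of_tendsto_of_le_of_le tendsto_const_nhds htend hle1 hle2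
  · intro l
    refine (hTuniq (T (u l)) (T (u l)) le_rfl fun v hv => ?_).symm
    exact hTmin (u l) v (le_trans (hTle (u l)) hv)
end

section
/- Monotonicity formula for I: for every u ∈ E with 0 < u, I(u) − I(T u) = (‖u‖² − ‖T u‖²) / N(T u)², and this quantity is ≥ 0. -/
/-- Monotonicity formula for the optimal-control functional
`I u = ‖u‖² / N (T u)²`. -/
theorem optimal_control_functional_monotonicity
    {E : Type*} [NormedAddCommGroup E] [InnerProductSpace ℝ E] [PartialOrder E]
    (hadd : ∀ x y z : E, x ≤ y → x + z ≤ y + z)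
    (hsmul : ∀ (c : ℝ) (x : E), 0 ≤ x → 0 ≤ c → 0 ≤ c • x)
    (T : E → E)
    (hTle : ∀ u : E, u ≤ T u)
    (hTmin : ∀ u v : E, u ≤ v → ‖T u‖ ≤ ‖v‖)
    (hTuniq : ∀ u m : E, u ≤ m → (∀ v : E, u ≤ v → ‖m‖ ≤ ‖v‖) → m = T u)
    (N : E → ℝ)
    (hNpos : ∀ u : E, 0 < u → 0 < N u)
    (hNmono : ∀ u v : E, 0 < u → u ≤ v → N u ≤ N v) :
    ∀ u : E, 0 < u →
      ‖u‖ ^ 2 / N (T u) ^ 2 - ‖T u‖ ^ 2 / N (T (T u)) ^ 2 =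
          (‖u‖ ^ 2 - ‖T u‖ ^ 2) / N (T u) ^ 2 ∧
        (‖u‖ ^ 2 - ‖T u‖ ^ 2) / N (T u) ^ 2 ≥ 0 := by
  intro u hu
  have hfix : T (T u) = T u := by
    refine (hTuniq (T u) (T u) le_rfl ?_).symm
    intro v hv
    exact hTmin u v ((hTle u).trans hv)
  have hTupos : 0 < T u := lt_of_lt_of_le hu (hTle u)
  have hN : 0 < N (T u) := hNpos _ hTupos
  have hnorm : ‖T u‖ ≤ ‖u‖ := hTmin u u le_rfl
  constructor
  · rw [hfix, sub_div]
  · apply div_nonneg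
    · have h1 : ‖T u‖ ^ 2 ≤ ‖u‖ ^ 2 := pow_le_pow_left₀ (norm_nonneg _) hnorm 2
      linarith
    · positivity
end

section
/- Rigidity for I: for every u ∈ E with 0 < u, I(T u) ≤ I(u); moreover, if I(u) = I(T u) then T u = u. -/
/-- Rigidity for the optimal-control functional `I u = ‖u‖² / N (T u)²`:
`I (T u) ≤ I u` and equality forces `T u = u`. -/
theorem optimal_control_functional_rigidity
    {E : Type*} [NormedAddCommGroup E] [InnerProductSpace ℝ E] [PartialOrder E]
    (hadd : ∀ x y z : E, x ≤ y → x + z ≤ y + z)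
    (hsmul : ∀ (c : ℝ) (x : E), 0 ≤ x → 0 ≤ c → 0 ≤ c • x)
    (T : E → E)
    (hTle : ∀ u : E, u ≤ T u)
    (hTmin : ∀ u v : E, u ≤ v → ‖T u‖ ≤ ‖v‖)
    (hTuniq : ∀ u m : E, u ≤ m → (∀ v : E, u ≤ v → ‖m‖ ≤ ‖v‖) → m = T u)
    (N : E → ℝ)
    (hNpos : ∀ u : E, 0 < u → 0 < N u)
    (hNmono : ∀ u v : E, 0 < u → u ≤ v → N u ≤ N v) :
    ∀ u : E, 0 < u →
      ‖T u‖ ^ 2 / N (T (T u)) ^ 2 ≤ ‖u‖ ^ 2 / N (T u) ^ 2 ∧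
        (‖u‖ ^ 2 / N (T u) ^ 2 = ‖T u‖ ^ 2 / N (T (T u)) ^ 2 → T u = u) := by
  intro u hu
  have hTT : T (T u) = T u := by
    symm
    exact hTuniq (T u) (T u) le_rfl (fun v hv => hTmin u v ((hTle u).trans hv))
  have hTupos : 0 < T u := lt_of_lt_of_le hu (hTle u)
  have hNp : 0 < N (T u) := hNpos _ hTupos
  have hN2 : 0 < N (T u) ^ 2 := by positivity
  have hle : ‖T u‖ ≤ ‖u‖ := hTmin u u le_rfl
  have hsq : ‖T u‖ ^ 2 ≤ ‖u‖ ^ 2 := by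
    have := norm_nonneg (T u); nlinarith
  rw [hTT]
  constructor
  · gcongr
  · intro heq
    have hnorm : ‖u‖ = ‖T u‖ := by
      field_simp at heq
      exact (pow_left_inj₀ (norm_nonneg _) (norm_nonneg _) two_ne_zero).mp heq
    symm
    exact hTuniq u u le_rfl (fun v hv => hnorm ▸ hTmin u v hv)
end

section
/- Minimizers of I are fixed points of T: if u ∈ E with 0 < u satisfies I(u) = ⨅ {I(v) : v ∈ E, 0 < v}, then T u = u. -/
/-- Minimizers of the optimal-control functional `I u = ‖u‖² / N (T u)²` over
the positive cone are fixed points of `T`. -/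
theorem optimal_control_minimizer_is_fixed_point
    {E : Type*} [NormedAddCommGroup E] [InnerProductSpace ℝ E] [PartialOrder E]
    (hadd : ∀ x y z : E, x ≤ y → x + z ≤ y + z)
    (hsmul : ∀ (c : ℝ) (x : E), 0 ≤ x → 0 ≤ c → 0 ≤ c • x)
    (T : E → E)
    (hTle : ∀ u : E, u ≤ T u)
    (hTmin : ∀ u v : E, u ≤ v → ‖T u‖ ≤ ‖v‖)
    (hTuniq : ∀ u m : E, u ≤ m → (∀ v : E, u ≤ v → ‖m‖ ≤ ‖v‖) → m = T u)
    (N : E → ℝ)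
    (hNpos : ∀ u : E, 0 < u → 0 < N u)
    (hNmono : ∀ u v : E, 0 < u → u ≤ v → N u ≤ N v) :
    ∀ u : E, 0 < u →
      ‖u‖ ^ 2 / N (T u) ^ 2 =
          sInf {r : ℝ | ∃ v : E, 0 < v ∧ r = ‖v‖ ^ 2 / N (T v) ^ 2} →
      T u = u := by
  intro u hu hmin
  -- T is idempotent: T (T u) = T u
  have hfix : T u = T (T u) :=
    hTuniq (T u) (T u) le_rfl (fun v hv => hTmin u v ((hTle u).trans hv))
  have hTupos : 0 < T u := lt_of_lt_of_le hu (hTle u)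
  have hNTpos : 0 < N (T u) := hNpos _ hTupos
  have hbdd : BddBelow {r : ℝ | ∃ v : E, 0 < v ∧ r = ‖v‖ ^ 2 / N (T v) ^ 2} := by
    refine ⟨0, fun r hr => ?_⟩
    obtain ⟨v, _, rfl⟩ := hr
    positivity
  have hmem : ‖T u‖ ^ 2 / N (T (T u)) ^ 2 ∈
      {r : ℝ | ∃ v : E, 0 < v ∧ r = ‖v‖ ^ 2 / N (T v) ^ 2} := ⟨T u, hTupos, rfl⟩
  have hle : ‖u‖ ^ 2 / N (T u) ^ 2 ≤ ‖T u‖ ^ 2 / N (T u) ^ 2 := by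
    have := csInf_le hbdd hmem
    rw [← hfix] at this
    rw [hmin]
    exact this
  have h1 : ‖u‖ ^ 2 ≤ ‖T u‖ ^ 2 :=
    (div_le_div_iff_of_pos_right (by positivity)).mp hle
  have h2 : ‖T u‖ ≤ ‖u‖ := hTmin u u le_rfl
  have hnorm : ‖u‖ = ‖T u‖ :=
    le_antisymm (by nlinarith [norm_nonneg u, norm_nonneg (T u)]) h2
  exact (hTuniq u u le_rfl (fun v hv => hnorm ▸ hTmin u v hv)).symm
end

section
/- Assume in addition that N is strictly monotone on the positive cone: N(u) < N(v) whenever 0 < u, u ≤ v and u ≠ v. Then for every u ∈ E with 0 < u and ‖u‖ ≠ 0: I(u) = J(u) if and only if T u = u. -/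
/-- If `N` is strictly monotone on the positive cone, then for `u > 0` with
`‖u‖ ≠ 0`, `I u = J u` if and only if `T u = u`. -/
theorem optimal_control_eq_yamabe_iff_fixed_point
    {E : Type*} [NormedAddCommGroup E] [InnerProductSpace ℝ E] [PartialOrder E]
    (hadd : ∀ x y z : E, x ≤ y → x + z ≤ y + z)
    (hsmul : ∀ (c : ℝ) (x : E), 0 ≤ x → 0 ≤ c → 0 ≤ c • x)
    (T : E → E)
    (hTle : ∀ u : E, u ≤ T u)
    (hTmin : ∀ u v : E, u ≤ v → ‖T u‖ ≤ ‖v‖)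
    (hTuniq : ∀ u m : E, u ≤ m → (∀ v : E, u ≤ v → ‖m‖ ≤ ‖v‖) → m = T u)
    (N : E → ℝ)
    (hNpos : ∀ u : E, 0 < u → 0 < N u)
    (hNmono : ∀ u v : E, 0 < u → u ≤ v → N u ≤ N v)
    (hNstrict : ∀ u v : E, 0 < u → u ≤ v → u ≠ v → N u < N v) :
    ∀ u : E, 0 < u → ‖u‖ ≠ 0 →
      (‖u‖ ^ 2 / N (T u) ^ 2 = ‖u‖ ^ 2 / N u ^ 2 ↔ T u = u) := by
  intro u hu hnu
  constructor
  · intro h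
    by_contra hne
    have hNu := hNpos u hu
    have hlt : N u < N (T u) := hNstrict u (T u) hu (hTle u) (Ne.symm hne)
    have h2 : N (T u) ^ 2 = N u ^ 2 := by
      have hn2 : (0:ℝ) < ‖u‖ ^ 2 := by positivity
      have hTpos : 0 < N (T u) := lt_trans hNu hlt
      field_simp at h
      nlinarith [h]
    nlinarith
  · intro h; rw [h]
end

section
/- The infima coincide: ⨅ {J(u) : u ∈ E, 0 < u} = ⨅ {I(u) : u ∈ E, 0 < u}. -/
/-- The infima of `J u = ‖u‖² / N u²` and `I u = ‖u‖² / N (T u)²` over the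
positive cone coincide. -/
theorem yamabe_infimum_eq_optimal_control_infimum
    {E : Type*} [NormedAddCommGroup E] [InnerProductSpace ℝ E] [PartialOrder E]
    (hadd : ∀ x y z : E, x ≤ y → x + z ≤ y + z)
    (hsmul : ∀ (c : ℝ) (x : E), 0 ≤ x → 0 ≤ c → 0 ≤ c • x)
    (T : E → E)
    (hTle : ∀ u : E, u ≤ T u)
    (hTmin : ∀ u v : E, u ≤ v → ‖T u‖ ≤ ‖v‖)
    (hTuniq : ∀ u m : E, u ≤ m → (∀ v : E, u ≤ v → ‖m‖ ≤ ‖v‖) → m = T u)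
    (N : E → ℝ)
    (hNpos : ∀ u : E, 0 < u → 0 < N u)
    (hNmono : ∀ u v : E, 0 < u → u ≤ v → N u ≤ N v) :
    sInf {r : ℝ | ∃ u : E, 0 < u ∧ r = ‖u‖ ^ 2 / N u ^ 2} =
      sInf {r : ℝ | ∃ u : E, 0 < u ∧ r = ‖u‖ ^ 2 / N (T u) ^ 2} := by
  apply csInf_eq_csInf_of_forall_exists_le
  · rintro r ⟨u, hu, rfl⟩
    -- I(u) ≤ J(u) since N u ≤ N (T u)
    refine ⟨‖u‖ ^ 2 / N (T u) ^ 2, ⟨u, hu, rfl⟩, ?_⟩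
    have h1 : 0 < N u := hNpos u hu
    have h2 : N u ≤ N (T u) := hNmono u (T u) hu (hTle u)
    gcongr
  · rintro r ⟨u, hu, rfl⟩
    -- J(T u) ≤ I(u) since ‖T u‖ ≤ ‖u‖
    have hTu : 0 < T u := lt_of_lt_of_le hu (hTle u)
    refine ⟨‖T u‖ ^ 2 / N (T u) ^ 2, ⟨T u, hTu, rfl⟩, ?_⟩
    have h1 : 0 < N (T u) := hNpos _ hTu
    gcongr
    exact hTmin u u le_rfl
end

section
/- Minimizers coincide: for every u ∈ E with 0 < u, J(u) = ⨅ {J(v) : v ∈ E, 0 < v} if and only if I(u) = ⨅ {I(v) : v ∈ E, 0 < v}. -/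
/-- `u > 0` minimizes `J u = ‖u‖² / N u²` over the positive cone if and only if
it minimizes `I u = ‖u‖² / N (T u)²`. -/
theorem yamabe_minimizer_iff_optimal_control_minimizer
    {E : Type*} [NormedAddCommGroup E] [InnerProductSpace ℝ E] [PartialOrder E]
    (hadd : ∀ x y z : E, x ≤ y → x + z ≤ y + z)
    (hsmul : ∀ (c : ℝ) (x : E), 0 ≤ x → 0 ≤ c → 0 ≤ c • x)
    (T : E → E)
    (hTle : ∀ u : E, u ≤ T u)
    (hTmin : ∀ u v : E, u ≤ v → ‖T u‖ ≤ ‖v‖)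
    (hTuniq : ∀ u m : E, u ≤ m → (∀ v : E, u ≤ v → ‖m‖ ≤ ‖v‖) → m = T u)
    (N : E → ℝ)
    (hNpos : ∀ u : E, 0 < u → 0 < N u)
    (hNmono : ∀ u v : E, 0 < u → u ≤ v → N u ≤ N v) :
    ∀ u : E, 0 < u →
      (‖u‖ ^ 2 / N u ^ 2 = sInf {r : ℝ | ∃ v : E, 0 < v ∧ r = ‖v‖ ^ 2 / N v ^ 2} ↔
        ‖u‖ ^ 2 / N (T u) ^ 2 =
          sInf {r : ℝ | ∃ v : E, 0 < v ∧ r = ‖v‖ ^ 2 / N (T v) ^ 2}) := by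
  intro u hu
  have hTpos : ∀ v : E, 0 < v → 0 < T v := fun v hv => lt_of_lt_of_le hv (hTle v)
  have hTT : ∀ v : E, T (T v) = T v := fun v =>
    (hTuniq (T v) (T v) le_rfl fun w hw => hTmin v w ((hTle v).trans hw)).symm
  set SJ := {r : ℝ | ∃ v : E, 0 < v ∧ r = ‖v‖ ^ 2 / N v ^ 2} with hSJ
  set SI := {r : ℝ | ∃ v : E, 0 < v ∧ r = ‖v‖ ^ 2 / N (T v) ^ 2} with hSI
  have bddJ : BddBelow SJ := ⟨0, by rintro r ⟨v, hv, rfl⟩; positivity⟩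
  have bddI : BddBelow SI := ⟨0, by rintro r ⟨v, hv, rfl⟩; positivity⟩
  have neJ : SJ.Nonempty := ⟨_, u, hu, rfl⟩
  have neI : SI.Nonempty := ⟨_, u, hu, rfl⟩
  have hIJ : ∀ v : E, 0 < v → ‖v‖ ^ 2 / N (T v) ^ 2 ≤ ‖v‖ ^ 2 / N v ^ 2 := by
    intro v hv
    have h1 := hNpos v hv
    have h2 := hNmono v (T v) hv (hTle v)
    gcongr
  have hJT : ∀ v : E, 0 < v → ‖T v‖ ^ 2 / N (T v) ^ 2 ≤ ‖v‖ ^ 2 / N (T v) ^ 2 := by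
    intro v hv
    have h1 := hNpos (T v) (hTpos v hv)
    have h2 := hTmin v v le_rfl
    gcongr
  have key : sInf SI = sInf SJ := by
    apply le_antisymm
    · apply le_csInf neJ
      rintro r ⟨v, hv, rfl⟩
      exact (csInf_le bddI ⟨v, hv, rfl⟩).trans (hIJ v hv)
    · apply le_csInf neI
      rintro r ⟨v, hv, rfl⟩
      exact (csInf_le bddJ ⟨T v, hTpos v hv, rfl⟩).trans (hJT v hv)
  constructor
  · intro h
    apply le_antisymm
    · calc ‖u‖ ^ 2 / N (T u) ^ 2 ≤ ‖u‖ ^ 2 / N u ^ 2 := hIJ u hu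
        _ = sInf SJ := h
        _ = sInf SI := key.symm
    · exact csInf_le bddI ⟨u, hu, rfl⟩
  · intro h
    -- first show ‖T u‖ = ‖u‖
    have hle : ‖u‖ ^ 2 / N (T u) ^ 2 ≤ ‖T u‖ ^ 2 / N (T u) ^ 2 := by
      calc ‖u‖ ^ 2 / N (T u) ^ 2 = sInf SI := h
        _ = sInf SJ := key
        _ ≤ ‖T u‖ ^ 2 / N (T u) ^ 2 := csInf_le bddJ ⟨T u, hTpos u hu, rfl⟩
    have hNTu : (0:ℝ) < N (T u) ^ 2 := by
      have := hNpos (T u) (hTpos u hu); positivity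
    have hnorm2 : ‖u‖ ^ 2 ≤ ‖T u‖ ^ 2 := (div_le_div_iff_of_pos_right hNTu).mp hle
    have hnorm : ‖T u‖ = ‖u‖ :=
      le_antisymm (hTmin u u le_rfl)
        (by nlinarith [norm_nonneg u, norm_nonneg (T u)])
    have huT : u = T u := hTuniq u u le_rfl fun v hv => hnorm ▸ hTmin u v hv
    calc ‖u‖ ^ 2 / N u ^ 2 = ‖u‖ ^ 2 / N (T u) ^ 2 := by rw [← huT]
      _ = sInf SI := h
      _ = sInf SJ := key
end
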